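/- Let Θ be a set and, for some ε > 0, suppose sup_{θ∈Θ} ∫ |log f_θ(z)|^{1+ε} p(z) dz ≤ B_p < ∞ and sup_{θ∈Θ} ∫ |log f_θ(z)|^{1+ε} q(z) dz ≤ B_q < ∞ for probability densities p and q. Then sup_{θ∈Θ} |∫ log f_θ(z) q(z) dz − ∫ log f_θ(z) p(z) dz| ≤ (B_p + B_q)^{1/(1+ε)} · (∫ |q(z) − p(z)| dz)^{ε/(1+ε)}. -/

import Mathlib

open MeasureTheory

/-- Real-valued Hölder inequality for nonnegative integrable functions. -/
theorem holder_real {α : Type*} [MeasurableSpace α] {μ : Measure α} {r s : ℝ}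
    (hrs : Real.HolderConjugate r s) {F G : α → ℝ}
    (hF0 : ∀ x, 0 ≤ F x) (hG0 : ∀ x, 0 ≤ G x)
    (hFm : AEMeasurable F μ) (hGm : AEMeasurable G μ)
    (hFG : Integrable (fun x => F x * G x) μ)
    (hFr : Integrable (fun x => F x ^ r) μ) (hGs : Integrable (fun x => G x ^ s) μ) :
    ∫ x, F x * G x ∂μ
      ≤ (∫ x, F x ^ r ∂μ) ^ (1 / r) * (∫ x, G x ^ s ∂μ) ^ (1 / s) := by
  have h1 : ENNReal.ofReal (∫ x, F x * G x ∂μ)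
      = ∫⁻ x, ENNReal.ofReal (F x) * ENNReal.ofReal (G x) ∂μ := by
    rw [ofReal_integral_eq_lintegral_ofReal hFG
      (Filter.Eventually.of_forall fun x => mul_nonneg (hF0 x) (hG0 x))]
    congr 1; funext x; rw [ENNReal.ofReal_mul (hF0 x)]
  have h2 : ∫⁻ x, (ENNReal.ofReal (F x)) ^ r ∂μ = ENNReal.ofReal (∫ x, F x ^ r ∂μ) := by
    rw [ofReal_integral_eq_lintegral_ofReal hFr
      (Filter.Eventually.of_forall fun x => Real.rpow_nonneg (hF0 x) r)]
    congr 1; funext x; rw [ENNReal.ofReal_rpow_of_nonneg (hF0 x) hrs.nonneg]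
  have h3 : ∫⁻ x, (ENNReal.ofReal (G x)) ^ s ∂μ = ENNReal.ofReal (∫ x, G x ^ s ∂μ) := by
    rw [ofReal_integral_eq_lintegral_ofReal hGs
      (Filter.Eventually.of_forall fun x => Real.rpow_nonneg (hG0 x) s)]
    congr 1; funext x; rw [ENNReal.ofReal_rpow_of_nonneg (hG0 x) hrs.symm.nonneg]
  have hH := ENNReal.lintegral_mul_le_Lp_mul_Lq μ hrs
    (ENNReal.measurable_ofReal.comp_aemeasurable hFm)
    (ENNReal.measurable_ofReal.comp_aemeasurable hGm)
  simp only [Pi.mul_apply, Function.comp_apply] at hH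
  rw [← h1, h2, h3] at hH
  have hIF : 0 ≤ ∫ x, F x ^ r ∂μ := integral_nonneg fun x => Real.rpow_nonneg (hF0 x) r
  have hIG : 0 ≤ ∫ x, G x ^ s ∂μ := integral_nonneg fun x => Real.rpow_nonneg (hG0 x) s
  have hRHS : ENNReal.ofReal (∫ x, F x ^ r ∂μ) ^ (1/r) * ENNReal.ofReal (∫ x, G x ^ s ∂μ) ^ (1/s)
      = ENNReal.ofReal ((∫ x, F x ^ r ∂μ) ^ (1/r) * (∫ x, G x ^ s ∂μ) ^ (1/s)) := by
    rw [ENNReal.ofReal_rpow_of_nonneg hIF (one_div_nonneg.mpr hrs.nonneg),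
        ENNReal.ofReal_rpow_of_nonneg hIG (one_div_nonneg.mpr hrs.symm.nonneg),
        ← ENNReal.ofReal_mul (Real.rpow_nonneg hIF _)]
  rw [hRHS] at hH
  exact (ENNReal.ofReal_le_ofReal_iff (by positivity)).mp hH

/-- Lemma 1 of the paper: if ∫|log f_θ|^{1+ε} is bounded by B_p under p and
by B_q under q uniformly in θ, then uniformly in θ,
|∫ log f_θ q − ∫ log f_θ p| ≤ (B_p + B_q)^{1/(1+ε)} (∫|q − p|)^{ε/(1+ε)}. -/
theorem stmt_4 {d : ℕ} {Θ : Type*} (f : Θ → (Fin d → ℝ) → ℝ)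
    (hfpos : ∀ θ z, 0 < f θ z)
    (p q : (Fin d → ℝ) → ℝ) (ε Bp Bq : ℝ) (hε : 0 < ε)
    (hp0 : ∀ z, 0 ≤ p z) (hq0 : ∀ z, 0 ≤ q z)
    (hpi : Integrable p) (hqi : Integrable q)
    (hp1 : ∫ z, p z = 1) (hq1 : ∫ z, q z = 1)
    (hf : ∀ θ, Measurable (f θ))
    (hint_p : ∀ θ, Integrable (fun z => |Real.log (f θ z)| ^ (1 + ε) * p z))
    (hint_q : ∀ θ, Integrable (fun z => |Real.log (f θ z)| ^ (1 + ε) * q z))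
    (hint_lp : ∀ θ, Integrable (fun z => Real.log (f θ z) * p z))
    (hint_lq : ∀ θ, Integrable (fun z => Real.log (f θ z) * q z))
    (hBp : ∀ θ, ∫ z, |Real.log (f θ z)| ^ (1 + ε) * p z ≤ Bp)
    (hBq : ∀ θ, ∫ z, |Real.log (f θ z)| ^ (1 + ε) * q z ≤ Bq) :
    ∀ θ, |(∫ z, Real.log (f θ z) * q z) - ∫ z, Real.log (f θ z) * p z|
      ≤ (Bp + Bq) ^ (1 / (1 + ε)) * (∫ z, |q z - p z|) ^ (ε / (1 + ε)) := by
  intro θ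
  have hε1 : (0:ℝ) < 1 + ε := by linarith
  have hεne : (1:ℝ) + ε ≠ 0 := ne_of_gt hε1
  set g : (Fin d → ℝ) → ℝ := fun z => |Real.log (f θ z)| with hgdef
  have hg0 : ∀ z, 0 ≤ g z := fun z => abs_nonneg _
  have hgm : Measurable g := (Real.measurable_log.comp (hf θ)).abs
  have hpm : AEMeasurable p volume := hpi.aemeasurable
  have hqm : AEMeasurable q volume := hqi.aemeasurable
  have hdm : AEMeasurable (fun z => |q z - p z|) volume := measurable_abs.comp_aemeasurable (hqm.sub hpm)
  have hbound : ∀ z, |q z - p z| ≤ q z + p z := by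
    intro z
    calc |q z - p z| ≤ |q z| + |p z| := abs_sub _ _
      _ = q z + p z := by rw [abs_of_nonneg (hq0 z), abs_of_nonneg (hp0 z)]
  -- integrability of g * q, g * p
  have hgq : Integrable (fun z => g z * q z) := by
    refine ((hint_lq θ).abs).congr (Filter.Eventually.of_forall fun z => ?_)
    simp [hgdef, abs_mul, abs_of_nonneg (hq0 z)]
  have hgp : Integrable (fun z => g z * p z) := by
    refine ((hint_lp θ).abs).congr (Filter.Eventually.of_forall fun z => ?_)
    simp [hgdef, abs_mul, abs_of_nonneg (hp0 z)]
  have hqp_int : Integrable (fun z => |q z - p z|) := (hqi.sub hpi).abs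
  -- integrability of g * |q - p|
  have hgqp : Integrable (fun z => g z * |q z - p z|) := by
    refine (hgq.add hgp).mono ((hgm.aemeasurable.mul hdm).aestronglyMeasurable)
      (Filter.Eventually.of_forall fun z => ?_)
    simp only [Real.norm_eq_abs, Pi.add_apply]
    rw [abs_of_nonneg (mul_nonneg (hg0 z) (abs_nonneg _)),
        abs_of_nonneg (add_nonneg (mul_nonneg (hg0 z) (hq0 z)) (mul_nonneg (hg0 z) (hp0 z)))]
    calc g z * |q z - p z| ≤ g z * (q z + p z) :=
          mul_le_mul_of_nonneg_left (hbound z) (hg0 z)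
      _ = g z * q z + g z * p z := by ring
  -- restate hypotheses in terms of g
  have hint_q' : Integrable (fun z => g z ^ (1 + ε) * q z) := by
    simpa only [hgdef] using hint_q θ
  have hint_p' : Integrable (fun z => g z ^ (1 + ε) * p z) := by
    simpa only [hgdef] using hint_p θ
  have hBq' : ∫ z, g z ^ (1 + ε) * q z ≤ Bq := by
    simpa only [hgdef] using hBq θ
  have hBp' : ∫ z, g z ^ (1 + ε) * p z ≤ Bp := by
    simpa only [hgdef] using hBp θ
  -- integrability of g^(1+ε) * |q - p|
  have hgem : Measurable (fun z => g z ^ (1 + ε)) := hgm.pow_const (1+ε)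
  have hgep : Integrable (fun z => g z ^ (1 + ε) * |q z - p z|) := by
    refine (hint_q'.add hint_p').mono
      ((hgem.aemeasurable.mul hdm).aestronglyMeasurable)
      (Filter.Eventually.of_forall fun z => ?_)
    have hge0 : 0 ≤ g z ^ (1 + ε) := Real.rpow_nonneg (hg0 z) _
    simp only [Real.norm_eq_abs, Pi.add_apply]
    rw [abs_of_nonneg (mul_nonneg hge0 (abs_nonneg _)),
        abs_of_nonneg (add_nonneg (mul_nonneg hge0 (hq0 z)) (mul_nonneg hge0 (hp0 z)))]
    calc g z ^ (1+ε) * |q z - p z| ≤ g z ^ (1+ε) * (q z + p z) :=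
          mul_le_mul_of_nonneg_left (hbound z) hge0
      _ = g z ^ (1+ε) * q z + g z ^ (1+ε) * p z := by ring
  -- bound on ∫ g^(1+ε)|q-p|
  have hA_nonneg : 0 ≤ ∫ z, g z ^ (1 + ε) * |q z - p z| :=
    integral_nonneg fun z => mul_nonneg (Real.rpow_nonneg (hg0 z) _) (abs_nonneg _)
  have hA : ∫ z, g z ^ (1 + ε) * |q z - p z| ≤ Bp + Bq := by
    have hmono : ∫ z, g z ^ (1 + ε) * |q z - p z|
        ≤ ∫ z, (g z ^ (1 + ε) * q z + g z ^ (1 + ε) * p z) := by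
      refine integral_mono hgep (hint_q'.add hint_p') fun z => ?_
      have hge0 : 0 ≤ g z ^ (1 + ε) := Real.rpow_nonneg (hg0 z) _
      calc g z ^ (1+ε) * |q z - p z| ≤ g z ^ (1+ε) * (q z + p z) :=
            mul_le_mul_of_nonneg_left (hbound z) hge0
        _ = g z ^ (1+ε) * q z + g z ^ (1+ε) * p z := by ring
    rw [integral_add hint_q' hint_p'] at hmono
    linarith
  have hBpq0 : 0 ≤ Bp + Bq := hA_nonneg.trans hA
  -- step 1
  have h1 : |(∫ z, Real.log (f θ z) * q z) - ∫ z, Real.log (f θ z) * p z|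
      ≤ ∫ z, g z * |q z - p z| := by
    rw [← integral_sub (hint_lq θ) (hint_lp θ)]
    have hni := norm_integral_le_integral_norm (μ := volume)
      (fun z => Real.log (f θ z) * q z - Real.log (f θ z) * p z)
    simp only [Real.norm_eq_abs] at hni
    refine hni.trans (le_of_eq ?_)
    congr 1; funext z
    simp only [hgdef]
    rw [← mul_sub, abs_mul]
  -- Hölder
  have hconj : Real.HolderConjugate (1 + ε) ((1 + ε) / ε) := by
    rw [Real.holderConjugate_iff]
    constructor
    · linarith
    · rw [inv_div]
      field_simp
  set F : (Fin d → ℝ) → ℝ := fun z => g z * |q z - p z| ^ (1 / (1 + ε)) with hFdef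
  set G : (Fin d → ℝ) → ℝ := fun z => |q z - p z| ^ (ε / (1 + ε)) with hGdef
  have hF0 : ∀ z, 0 ≤ F z := fun z =>
    mul_nonneg (hg0 z) (Real.rpow_nonneg (abs_nonneg _) _)
  have hG0 : ∀ z, 0 ≤ G z := fun z => Real.rpow_nonneg (abs_nonneg _) _
  have hFm : AEMeasurable F volume :=
    hgm.aemeasurable.mul (hdm.pow_const _)
  have hGm : AEMeasurable G volume := hdm.pow_const _
  have eqFG : ∀ z, F z * G z = g z * |q z - p z| := by
    intro z
    simp only [hFdef, hGdef]
    rw [mul_assoc, ← Real.rpow_add_of_nonneg (abs_nonneg _)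
      (one_div_nonneg.mpr hε1.le) (div_nonneg hε.le hε1.le)]
    have h : 1 / (1 + ε) + ε / (1 + ε) = 1 := by field_simp
    rw [h, Real.rpow_one]
  have eqFr : ∀ z, F z ^ (1 + ε) = g z ^ (1 + ε) * |q z - p z| := by
    intro z
    simp only [hFdef]
    rw [Real.mul_rpow (hg0 z) (Real.rpow_nonneg (abs_nonneg _) _),
        ← Real.rpow_mul (abs_nonneg _)]
    have h : 1 / (1 + ε) * (1 + ε) = 1 := by field_simp
    rw [h, Real.rpow_one]
  have eqGs : ∀ z, G z ^ ((1 + ε) / ε) = |q z - p z| := by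
    intro z
    simp only [hGdef]
    rw [← Real.rpow_mul (abs_nonneg _)]
    have h : ε / (1 + ε) * ((1 + ε) / ε) = 1 := by
      field_simp
    rw [h, Real.rpow_one]
  have hFG : Integrable (fun z => F z * G z) := by
    refine hgqp.congr (Filter.Eventually.of_forall fun z => (eqFG z).symm)
  have hFr : Integrable (fun z => F z ^ (1 + ε)) := by
    refine hgep.congr (Filter.Eventually.of_forall fun z => (eqFr z).symm)
  have hGs : Integrable (fun z => G z ^ ((1 + ε) / ε)) := by
    refine hqp_int.congr (Filter.Eventually.of_forall fun z => (eqGs z).symm)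
  have hhold := holder_real hconj hF0 hG0 hFm hGm hFG hFr hGs
  simp only [eqFG, eqFr, eqGs, one_div_div] at hhold
  -- finish
  calc |(∫ z, Real.log (f θ z) * q z) - ∫ z, Real.log (f θ z) * p z|
      ≤ ∫ z, g z * |q z - p z| := h1
    _ ≤ (∫ z, g z ^ (1+ε) * |q z - p z|) ^ (1/(1+ε)) * (∫ z, |q z - p z|) ^ (ε/(1+ε)) := hhold
    _ ≤ (Bp + Bq) ^ (1 / (1 + ε)) * (∫ z, |q z - p z|) ^ (ε / (1 + ε)) := by
        refine mul_le_mul_of_nonneg_right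
          (Real.rpow_le_rpow hA_nonneg hA (one_div_nonneg.mpr hε1.le))
          (Real.rpow_nonneg (integral_nonneg fun z => abs_nonneg _) _)
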